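/- Let μ be a σ-additive valuation (probability measure) on a σ-algebra A over X. Then X decomposes as a disjoint union X = A_∞ ∪ A_1 ∪ A_2 ∪ ⋯ where A_1, A_2, … are at most countably many pairwise disjoint atoms of μ and the restriction B ↦ μ(B ∩ A_∞) is atom-free. -/
import Mathlib


open MeasureTheory
open scoped ENNReal Classical

/-- An atom of a measure `μ`: a measurable set of positive measure all of whose
measurable subsets have measure `0` or full measure `μ A`. -/
def IsValuationAtom {X : Type*} [MeasurableSpace X] (μ : Measure X) (A : Set X) : Prop :=
  MeasurableSet A ∧ 0 < μ A ∧ ∀ B : Set X, MeasurableSet B → B ⊆ A → μ B = 0 ∨ μ B = μ A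

section Aux

variable {X : Type*} [MeasurableSpace X] (μ : Measure X)

/-- Greedy choice of a next atom disjoint from `S`, of measure at least half the
supremum of measures of atoms disjoint from `S`; `∅` if no suitable atom exists. -/
noncomputable def nextAtom (S : Set X) : Set X :=
  if h : ∃ T : Set X, IsValuationAtom μ T ∧ Disjoint T S ∧
      ∀ T' : Set X, IsValuationAtom μ T' → Disjoint T' S → μ T' ≤ 2 * μ T
  then h.choose else ∅

lemma nextAtom_empty_or_atom (S : Set X) :
    nextAtom μ S = ∅ ∨ (IsValuationAtom μ (nextAtom μ S) ∧ Disjoint (nextAtom μ S) S) := by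
  unfold nextAtom
  split
  · next h => exact Or.inr ⟨h.choose_spec.1, h.choose_spec.2.1⟩
  · exact Or.inl rfl

lemma nextAtom_measurable (S : Set X) : MeasurableSet (nextAtom μ S) := by
  rcases nextAtom_empty_or_atom μ S with h | h
  · rw [h]; exact MeasurableSet.empty
  · exact h.1.1

lemma nextAtom_disjoint (S : Set X) : Disjoint (nextAtom μ S) S := by
  rcases nextAtom_empty_or_atom μ S with h | h
  · rw [h]; exact disjoint_bot_left
  · exact h.2

lemma nextAtom_exists [IsProbabilityMeasure μ] (S : Set X)
    (h0 : ∃ T : Set X, IsValuationAtom μ T ∧ Disjoint T S) :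
    ∃ T : Set X, IsValuationAtom μ T ∧ Disjoint T S ∧
      ∀ T' : Set X, IsValuationAtom μ T' → Disjoint T' S → μ T' ≤ 2 * μ T := by
  set s : ℝ≥0∞ := ⨆ T : Set X, ⨆ _ : IsValuationAtom μ T ∧ Disjoint T S, μ T with hs
  have hsle : s ≤ 1 := by
    apply iSup_le; intro T; apply iSup_le; intro _; exact prob_le_one
  have hstop : s ≠ ⊤ := ne_top_of_le_ne_top (by norm_num) hsle
  have hspos : s ≠ 0 := by
    obtain ⟨T0, hT0, hd0⟩ := h0
    have : μ T0 ≤ s := le_iSup₂ (f := fun T (_ : IsValuationAtom μ T ∧ Disjoint T S) => μ T)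
      T0 ⟨hT0, hd0⟩
    intro h
    rw [h] at this
    exact absurd (le_antisymm this bot_le) (ne_of_gt hT0.2.1)
  have hhalf : s / 2 < s := ENNReal.half_lt_self hspos hstop
  rw [hs] at hhalf
  rw [lt_iSup_iff] at hhalf
  obtain ⟨T, hT⟩ := hhalf
  rw [lt_iSup_iff] at hT
  obtain ⟨⟨hTa, hTd⟩, hTlt⟩ := hT
  refine ⟨T, hTa, hTd, fun T' hT'a hT'd => ?_⟩
  have h1 : μ T' ≤ s := le_iSup₂ (f := fun T (_ : IsValuationAtom μ T ∧ Disjoint T S) => μ T)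
    T' ⟨hT'a, hT'd⟩
  calc μ T' ≤ s := h1
    _ = s / 2 + s / 2 := (ENNReal.add_halves s).symm
    _ ≤ μ T + μ T := add_le_add hTlt.le hTlt.le
    _ = 2 * μ T := (two_mul _).symm

lemma nextAtom_bound [IsProbabilityMeasure μ] (S : Set X) (T : Set X)
    (hTa : IsValuationAtom μ T) (hTd : Disjoint T S) :
    μ T ≤ 2 * μ (nextAtom μ S) := by
  have h := nextAtom_exists μ S ⟨T, hTa, hTd⟩
  rw [nextAtom, dif_pos h]
  exact h.choose_spec.2.2 T hTa hTd

/-- Cumulative union of chosen atoms. -/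
noncomputable def cumUnion : ℕ → Set X
  | 0 => ∅
  | n + 1 => cumUnion n ∪ nextAtom μ (cumUnion n)

/-- The sequence of chosen atoms. -/
noncomputable def atomSeq (n : ℕ) : Set X := nextAtom μ (cumUnion μ n)

lemma cumUnion_measurable : ∀ n, MeasurableSet (cumUnion μ n)
  | 0 => MeasurableSet.empty
  | n + 1 => (cumUnion_measurable n).union (nextAtom_measurable μ _)

lemma atomSeq_measurable (n : ℕ) : MeasurableSet (atomSeq μ n) :=
  nextAtom_measurable μ _

lemma cumUnion_mono : Monotone (cumUnion μ) :=
  monotone_nat_of_le_succ fun n => Set.subset_union_left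

lemma atomSeq_subset_cumUnion (n : ℕ) : atomSeq μ n ⊆ cumUnion μ (n + 1) :=
  Set.subset_union_right

lemma atomSeq_disjoint_cumUnion (n : ℕ) : Disjoint (atomSeq μ n) (cumUnion μ n) :=
  nextAtom_disjoint μ _

lemma atomSeq_pairwise : Pairwise (Function.onFun Disjoint (atomSeq μ)) := by
  have key : ∀ m n : ℕ, m < n → Disjoint (atomSeq μ m) (atomSeq μ n) := by
    intro m n hmn
    have h1 : atomSeq μ m ⊆ cumUnion μ n :=
      (atomSeq_subset_cumUnion μ m).trans (cumUnion_mono μ hmn)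
    exact (Disjoint.mono_right h1 (atomSeq_disjoint_cumUnion μ n)).symm
  intro m n hmn
  rcases lt_or_gt_of_ne hmn with h | h
  · exact key m n h
  · exact (key n m h).symm

end Aux

theorem decomposition_into_sliceable_part_and_atoms
    {X : Type*} [MeasurableSpace X] (μ : Measure X) [IsProbabilityMeasure μ] :
    ∃ (Ainf : Set X) (A : ℕ → Set X),
      MeasurableSet Ainf ∧ (∀ i, MeasurableSet (A i)) ∧
      Pairwise (Function.onFun Disjoint A) ∧
      (∀ i, Disjoint Ainf (A i)) ∧
      Ainf ∪ (⋃ i, A i) = Set.univ ∧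
      (∀ i, A i = ∅ ∨ IsValuationAtom μ (A i)) ∧
      -- the restriction `B ↦ μ (B ∩ Ainf)` is atom-free
      (¬ ∃ B : Set X, MeasurableSet B ∧ 0 < μ (B ∩ Ainf) ∧
        ∀ C : Set X, MeasurableSet C → C ⊆ B →
          μ (C ∩ Ainf) = 0 ∨ μ (C ∩ Ainf) = μ (B ∩ Ainf)) := by
  classical
  set A : ℕ → Set X := atomSeq μ with hA
  set Ainf : Set X := (⋃ i, A i)ᶜ with hAinf
  have hAmeas : ∀ i, MeasurableSet (A i) := atomSeq_measurable μ
  have hAinfmeas : MeasurableSet Ainf := (MeasurableSet.iUnion hAmeas).compl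
  have hpair : Pairwise (Function.onFun Disjoint A) := atomSeq_pairwise μ
  have hdisj : ∀ i, Disjoint Ainf (A i) := fun i =>
    Disjoint.mono_right (Set.subset_iUnion A i) disjoint_compl_left
  have huniv : Ainf ∪ (⋃ i, A i) = Set.univ := Set.compl_union_self _
  have hatoms : ∀ i, A i = ∅ ∨ IsValuationAtom μ (A i) := by
    intro i
    rcases nextAtom_empty_or_atom μ (cumUnion μ i) with h | h
    · exact Or.inl h
    · exact Or.inr h.1
  -- no atom of μ is disjoint from all the A i
  have hnoatom : ¬ ∃ T : Set X, IsValuationAtom μ T ∧ ∀ n, Disjoint T (A n) := by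
    rintro ⟨T, hTa, hTd⟩
    have hTdc : ∀ n, Disjoint T (cumUnion μ n) := by
      intro n
      induction n with
      | zero => exact disjoint_bot_right
      | succ n ih => exact Set.disjoint_union_right.mpr ⟨ih, hTd n⟩
    have hbound : ∀ n, μ T ≤ 2 * μ (A n) := fun n =>
      nextAtom_bound μ (cumUnion μ n) T hTa (hTdc n)
    have hsum : (∑' n, μ (A n)) ≤ 1 := by
      rw [← measure_iUnion hpair hAmeas]
      exact prob_le_one
    have hlow : ∀ n, μ T / 2 ≤ μ (A n) := by
      intro n
      rw [ENNReal.div_le_iff_le_mul (Or.inl (by norm_num)) (Or.inl (by norm_num))]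
      rw [mul_comm]
      exact hbound n
    have htop : (∑' n : ℕ, μ T / 2) ≤ ∑' n, μ (A n) := ENNReal.tsum_le_tsum hlow
    have hTpos : μ T / 2 ≠ 0 := by
      simp only [ne_eq, ENNReal.div_eq_zero_iff]
      push_neg
      exact ⟨ne_of_gt hTa.2.1, by norm_num⟩
    rw [ENNReal.tsum_const_eq_top_of_ne_zero hTpos] at htop
    exact absurd (htop.trans hsum) (by norm_num)
  refine ⟨Ainf, A, hAinfmeas, hAmeas, hpair, hdisj, huniv, hatoms, ?_⟩
  rintro ⟨B, hBmeas, hBpos, hBsub⟩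
  apply hnoatom
  refine ⟨B ∩ Ainf, ⟨hBmeas.inter hAinfmeas, hBpos, ?_⟩, fun n =>
    Disjoint.mono_left Set.inter_subset_right (hdisj n)⟩
  intro C hCmeas hCsub
  have hC : C ∩ Ainf = C := Set.inter_eq_self_of_subset_left
    (hCsub.trans Set.inter_subset_right)
  have := hBsub C hCmeas (hCsub.trans Set.inter_subset_left)
  rwa [hC] at this
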